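/- Let c ∈ ℂ with c ≠ 0, c³ ≠ 1, and c³ ≠ −8, and let S(1,1,c) be the 3-dimensional Sklyanin algebra at parameter c. Then every simple left S(1,1,c)-module M is finite-dimensional as a ℂ-vector space, of dimension at most 2. -/

import Mathlib

/-- The defining relations of the 3-dimensional Sklyanin algebra S(1,1,c),
on generators x = ι 0, y = ι 1, z = ι 2 of the free algebra:
yz + zy + cx², zx + xz + cy², xy + yx + cz². -/
inductive SklyaninRel (c : ℂ) : FreeAlgebra ℂ (Fin 3) → FreeAlgebra ℂ (Fin 3) → Prop
  | r1 : SklyaninRel c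
      (FreeAlgebra.ι ℂ (1 : Fin 3) * FreeAlgebra.ι ℂ (2 : Fin 3) +
       FreeAlgebra.ι ℂ (2 : Fin 3) * FreeAlgebra.ι ℂ (1 : Fin 3) +
       c • (FreeAlgebra.ι ℂ (0 : Fin 3) * FreeAlgebra.ι ℂ (0 : Fin 3))) 0
  | r2 : SklyaninRel c
      (FreeAlgebra.ι ℂ (2 : Fin 3) * FreeAlgebra.ι ℂ (0 : Fin 3) +
       FreeAlgebra.ι ℂ (0 : Fin 3) * FreeAlgebra.ι ℂ (2 : Fin 3) +
       c • (FreeAlgebra.ι ℂ (1 : Fin 3) * FreeAlgebra.ι ℂ (1 : Fin 3))) 0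
  | r3 : SklyaninRel c
      (FreeAlgebra.ι ℂ (0 : Fin 3) * FreeAlgebra.ι ℂ (1 : Fin 3) +
       FreeAlgebra.ι ℂ (1 : Fin 3) * FreeAlgebra.ι ℂ (0 : Fin 3) +
       c • (FreeAlgebra.ι ℂ (2 : Fin 3) * FreeAlgebra.ι ℂ (2 : Fin 3))) 0

/-- The 3-dimensional Sklyanin algebra S(1,1,c). -/
abbrev Sklyanin (c : ℂ) := RingQuot (SklyaninRel c)

/- ## Auxiliary material -/

/-- In any `ℂ`-algebra with elements satisfying the Sklyanin relations with `c³ ≠ 1`,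
the squares of the generators commute with the generators. -/
theorem SklyaninAux.sq_comm {S : Type} [Ring S] [Algebra ℂ S] {c : ℂ} (hc1 : c^3 ≠ 1) {x y z : S}
    (r1 : y*z + z*y + algebraMap ℂ S c * (x*x) = 0)
    (r2 : z*x + x*z + algebraMap ℂ S c * (y*y) = 0)
    (r3 : x*y + y*x + algebraMap ℂ S c * (z*z) = 0) :
    x*x*y = y*(x*x) ∧ x*x*z = z*(x*x) ∧ y*y*x = x*(y*y) ∧ y*y*z = z*(y*y) ∧
      z*z*x = x*(z*z) ∧ z*z*y = y*(z*z) := by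
  set C := algebraMap ℂ S c with hCdef
  have hcom : ∀ w : S, w * C = C * w := fun w => (Algebra.commutes c w).symm
  have cancel : ∀ w : S, w = C*(C*(C*w)) → w = 0 := by
    intro w h
    have hz : (1 - c^3) • w = 0 := by
      rw [sub_smul, one_smul, sub_eq_zero]
      calc w = C*(C*(C*w)) := h
        _ = c • (c • (c • w)) := by rw [Algebra.smul_def, Algebra.smul_def, Algebra.smul_def]
        _ = (c^3) • w := by rw [smul_smul, smul_smul]; ring_nf
    have hne : (1 - c^3) ≠ 0 := sub_ne_zero.mpr fun h' => hc1 h'.symm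
    calc w = (1 - c^3)⁻¹ • ((1 - c^3) • w) := by
            rw [smul_smul, inv_mul_cancel₀ hne, one_smul]
      _ = 0 := by rw [hz, smul_zero]
  have base1 : x*x*y - y*(x*x) - (C*(z*z*x) - C*(x*(z*z))) =
      x*(x*y + y*x + C*(z*z)) - (x*y + y*x + C*(z*z))*x - (x*C - C*x)*(z*z) := by noncomm_ring
  have base2 : z*z*x - x*(z*z) - (C*(y*y*z) - C*(z*(y*y))) =
      z*(z*x + x*z + C*(y*y)) - (z*x + x*z + C*(y*y))*z - (z*C - C*z)*(y*y) := by noncomm_ring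
  have base3 : y*y*z - z*(y*y) - (C*(x*x*y) - C*(y*(x*x))) =
      y*(y*z + z*y + C*(x*x)) - (y*z + z*y + C*(x*x))*y - (y*C - C*y)*(x*x) := by noncomm_ring
  have base4 : x*x*z - z*(x*x) - (C*(y*y*x) - C*(x*(y*y))) =
      x*(z*x + x*z + C*(y*y)) - (z*x + x*z + C*(y*y))*x - (x*C - C*x)*(y*y) := by noncomm_ring
  have base5 : y*y*x - x*(y*y) - (C*(z*z*y) - C*(y*(z*z))) =
      y*(x*y + y*x + C*(z*z)) - (x*y + y*x + C*(z*z))*y - (y*C - C*y)*(z*z) := by noncomm_ring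
  have base6 : z*z*y - y*(z*z) - (C*(x*x*z) - C*(z*(x*x))) =
      z*(y*z + z*y + C*(x*x)) - (y*z + z*y + C*(x*x))*z - (z*C - C*z)*(x*x) := by noncomm_ring
  rw [r3, hcom x, sub_self, zero_mul, mul_zero, zero_mul, sub_zero, sub_zero, sub_eq_zero,
    ← mul_sub] at base1
  rw [r2, hcom z, sub_self, zero_mul, mul_zero, zero_mul, sub_zero, sub_zero, sub_eq_zero,
    ← mul_sub] at base2
  rw [r1, hcom y, sub_self, zero_mul, mul_zero, zero_mul, sub_zero, sub_zero, sub_eq_zero,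
    ← mul_sub] at base3
  rw [r2, hcom x, sub_self, zero_mul, mul_zero, zero_mul, sub_zero, sub_zero, sub_eq_zero,
    ← mul_sub] at base4
  rw [r3, hcom y, sub_self, zero_mul, mul_zero, zero_mul, sub_zero, sub_zero, sub_eq_zero,
    ← mul_sub] at base5
  rw [r1, hcom z, sub_self, zero_mul, mul_zero, zero_mul, sub_zero, sub_zero, sub_eq_zero,
    ← mul_sub] at base6
  have hu : x*x*y - y*(x*x) = 0 :=
    cancel _ (base1.trans (by rw [base2, base3]))
  have hv : x*x*z - z*(x*x) = 0 :=
    cancel _ (base4.trans (by rw [base5, base6]))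
  have hu2 : y*y*z - z*(y*y) = 0 := by rw [base3, hu, mul_zero]
  have hu3 : z*z*x - x*(z*z) = 0 := by rw [base2, hu2, mul_zero]
  have hv2 : y*y*x - x*(y*y) = 0 := by rw [base5, base6, hv, mul_zero, mul_zero]
  have hv3 : z*z*y - y*(z*z) = 0 := by rw [base6, hv, mul_zero]
  exact ⟨sub_eq_zero.mp hu, sub_eq_zero.mp hv, sub_eq_zero.mp hv2, sub_eq_zero.mp hu2,
    sub_eq_zero.mp hu3, sub_eq_zero.mp hv3⟩

-- Dixmier's version of Schur's lemma: an endomorphism of a simple module of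
-- at most countable dimension over `ℂ` is a scalar.
open Polynomial in
theorem SklyaninAux.end_scalar {S : Type} [Ring S] [Algebra ℂ S] {M : Type} [AddCommGroup M]
    [Module ℂ M] [Module S M] [IsScalarTower ℂ S M] [SMulCommClass S ℂ M] [IsSimpleModule S M]
    (hrank : Module.rank ℂ M ≤ Cardinal.aleph0) (φ : Module.End S M) :
    ∃ a : ℂ, φ = a • LinearMap.id := by
  haveI := IsSimpleModule.nontrivial S M
  obtain ⟨m₀, hm₀⟩ := exists_ne (0 : M)
  let ev : Module.End S M →ₗ[ℂ] M :=
    { toFun := fun ψ => ψ m₀, map_add' := fun _ _ => rfl, map_smul' := fun _ _ => rfl }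
  have evinj : Function.Injective ev := by
    intro ψ χ h
    rcases LinearMap.injective_or_eq_zero (ψ - χ) with hinj | hz
    · have : (ψ - χ) m₀ = 0 := by
        simpa [ev, sub_eq_zero] using h
      have := hinj (a₁ := m₀) (a₂ := 0) (by simpa using this)
      exact absurd this hm₀
    · exact sub_eq_zero.mp hz
  have hrankD : Module.rank ℂ (Module.End S M) ≤ Cardinal.aleph0 :=
    (LinearMap.rank_le_of_injective ev evinj).trans hrank
  by_contra hno
  push_neg at hno
  have hbij : ∀ a : ℂ, Function.Bijective (φ - a • LinearMap.id : Module.End S M) :=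
    fun a => LinearMap.bijective_of_ne_zero (sub_ne_zero.mpr (hno a))
  let e : ℂ → (M ≃ₗ[S] M) := fun a => LinearEquiv.ofBijective _ (hbij a)
  let ψ : ℂ → Module.End S M := fun a => (e a).symm
  have hψ1 : ∀ a : ℂ, ψ a * (φ - a • LinearMap.id) = 1 := by
    intro a
    ext m
    exact (e a).symm_apply_apply m
  have hzero : ∀ r : Polynomial ℂ, aeval φ r = 0 → r = 0 := by
    suffices H : ∀ (n : ℕ) (r : Polynomial ℂ), r.natDegree ≤ n → aeval φ r = 0 → r = 0 from
      fun r hr => H r.natDegree r le_rfl hr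
    have base : ∀ r : Polynomial ℂ, r.natDegree = 0 → aeval φ r = 0 → r = 0 := by
      intro r hdeg hr
      have hC : r = C (r.coeff 0) := Polynomial.eq_C_of_natDegree_le_zero hdeg.le
      rw [hC, aeval_C] at hr
      have : (r.coeff 0) • m₀ = 0 := by
        have := congrArg (fun t : Module.End S M => t m₀) hr
        simpa using this
      rcases smul_eq_zero.mp this with h | h
      · rw [hC, h, map_zero]
      · exact absurd h hm₀
    intro n
    induction n with
    | zero => exact fun r hd => base r (Nat.le_zero.mp hd)
    | succ n ih =>
      intro r hdeg hr
      by_cases h0 : r = 0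
      · exact h0
      by_cases hd : r.natDegree = 0
      · exact base r hd hr
      have hdpos : 0 < r.degree :=
        Polynomial.natDegree_pos_iff_degree_pos.mp (Nat.pos_of_ne_zero hd)
      obtain ⟨a, ha⟩ := Complex.exists_root hdpos
      obtain ⟨r₁, hr₁⟩ := Polynomial.dvd_iff_isRoot.mpr ha
      by_cases hr₁0 : r₁ = 0
      · rw [hr₁, hr₁0, mul_zero]
      have haev : aeval φ r = (φ - a • LinearMap.id) * aeval φ r₁ := by
        rw [hr₁, map_mul, map_sub, aeval_X, aeval_C, Module.algebraMap_end_eq_smul_id]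
      have h1 : aeval φ r₁ = 0 := by
        have h2 : ψ a * ((φ - a • LinearMap.id) * aeval φ r₁) = 0 := by
          rw [← haev, hr, mul_zero]
        rwa [← mul_assoc, hψ1, one_mul] at h2
      have hdeg1 : r₁.natDegree ≤ n := by
        have := Polynomial.natDegree_mul (Polynomial.X_sub_C_ne_zero a) hr₁0
        rw [← hr₁, Polynomial.natDegree_X_sub_C] at this
        omega
      rw [hr₁, ih r₁ hdeg1 h1, mul_zero]
  have hind : LinearIndependent ℂ ψ := by
    rw [linearIndependent_iff']
    intro s g hsum i₀ hi₀
    set q : Polynomial ℂ := ∑ a ∈ s, C (g a) * ∏ b ∈ s.erase a, (X - C b) with hqdef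
    have hq0 : aeval φ q = 0 := by
      set P : Module.End S M := aeval φ (∏ b ∈ s, (X - C b)) with hPdef
      have hPa : ∀ a ∈ s, aeval φ (∏ b ∈ s.erase a, (X - C b)) = ψ a * P := by
        intro a ha
        have hfac : (∏ b ∈ s, (X - C b)) = (X - C a) * ∏ b ∈ s.erase a, (X - C b) :=
          (Finset.mul_prod_erase s _ ha).symm
        have hP2 : P = (φ - a • LinearMap.id) * aeval φ (∏ b ∈ s.erase a, (X - C b)) := by
          rw [hPdef, hfac, map_mul, map_sub, aeval_X, aeval_C,
            Module.algebraMap_end_eq_smul_id]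
        rw [hP2, ← mul_assoc, hψ1, one_mul]
      calc aeval φ q = ∑ a ∈ s, g a • (ψ a * P) := by
            rw [hqdef, map_sum]
            exact Finset.sum_congr rfl fun a ha => by
              rw [map_mul, aeval_C, ← Algebra.smul_def, hPa a ha]
        _ = (∑ a ∈ s, g a • ψ a) * P := by
            rw [Finset.sum_mul]
            exact Finset.sum_congr rfl fun a _ => (smul_mul_assoc _ _ _).symm
        _ = 0 := by rw [hsum, zero_mul]
    have hq : q = 0 := hzero q hq0
    have heval := congrArg (Polynomial.eval i₀) hq
    rw [hqdef] at heval
    simp only [Polynomial.eval_finset_sum, Polynomial.eval_mul, Polynomial.eval_C,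
      Polynomial.eval_prod, Polynomial.eval_sub, Polynomial.eval_X, Polynomial.eval_zero] at heval
    rw [Finset.sum_eq_single i₀ (fun a ha hne => ?_) (fun h => absurd hi₀ h)] at heval
    · have hprod : (∏ b ∈ s.erase i₀, (i₀ - b)) ≠ 0 := by
        rw [Finset.prod_ne_zero_iff]
        intro b hb
        exact sub_ne_zero.mpr (Ne.symm (Finset.mem_erase.mp hb).1)
      exact (mul_eq_zero.mp heval).resolve_right hprod
    · have hi : i₀ ∈ s.erase a := Finset.mem_erase.mpr ⟨Ne.symm hne, hi₀⟩
      rw [Finset.prod_eq_zero hi (by rw [sub_self]), mul_zero]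
  have hcard := hind.cardinal_le_rank
  rw [Cardinal.mk_complex] at hcard
  exact Cardinal.aleph0_lt_continuum.not_ge (hcard.trans hrankD)

namespace SklyaninAux

variable (c : ℂ)

/-- The images of the generators in the Sklyanin algebra. -/
noncomputable def g (i : Fin 3) : Sklyanin c :=
  RingQuot.mkAlgHom ℂ (SklyaninRel c) (FreeAlgebra.ι ℂ i)

lemma gen_top (B : Subalgebra ℂ (Sklyanin c)) (h0 : g c 0 ∈ B) (h1 : g c 1 ∈ B)
    (h2 : g c 2 ∈ B) : B = ⊤ := by
  rw [eq_top_iff]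
  have hadj : Algebra.adjoin ℂ (Set.range fun i : Fin 3 => g c i) = ⊤ := by
    have h1 : Set.range (fun i : Fin 3 => g c i) =
        ⇑(RingQuot.mkAlgHom ℂ (SklyaninRel c)) '' Set.range (FreeAlgebra.ι ℂ) := by
      rw [← Set.range_comp]; rfl
    rw [h1, ← AlgHom.map_adjoin, FreeAlgebra.adjoin_range_ι, Algebra.map_top,
      AlgHom.range_eq_top]
    exact RingQuot.mkAlgHom_surjective ℂ _
  rw [← hadj]
  apply Algebra.adjoin_le
  rintro w ⟨i, rfl⟩
  fin_cases i <;> assumption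

lemma rank_le : Module.rank ℂ (Sklyanin c) ≤ Cardinal.aleph0 := by
  have h := LinearMap.rank_le_of_surjective
    (RingQuot.mkAlgHom ℂ (SklyaninRel c)).toLinearMap (RingQuot.mkAlgHom_surjective ℂ _)
  refine h.trans ?_
  rw [FreeAlgebra.rank_eq]
  simpa using Cardinal.mk_le_aleph0 (α := List (Fin 3))

lemma rel1 : g c 1 * g c 2 + g c 2 * g c 1 + algebraMap ℂ (Sklyanin c) c * (g c 0 * g c 0) = 0 := by
  have h := RingQuot.mkAlgHom_rel ℂ (SklyaninRel.r1 (c := c))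
  simpa [g, map_add, map_mul, map_smul, Algebra.smul_def] using h

lemma rel2 : g c 2 * g c 0 + g c 0 * g c 2 + algebraMap ℂ (Sklyanin c) c * (g c 1 * g c 1) = 0 := by
  have h := RingQuot.mkAlgHom_rel ℂ (SklyaninRel.r2 (c := c))
  simpa [g, map_add, map_mul, map_smul, Algebra.smul_def] using h

lemma rel3 : g c 0 * g c 1 + g c 1 * g c 0 + algebraMap ℂ (Sklyanin c) c * (g c 2 * g c 2) = 0 := by
  have h := RingQuot.mkAlgHom_rel ℂ (SklyaninRel.r3 (c := c))
  simpa [g, map_add, map_mul, map_smul, Algebra.smul_def] using h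

end SklyaninAux

open SklyaninAux in
theorem sklyanin_simple_module_finrank_le_two
    (c : ℂ) (hc0 : c ≠ 0) (hc1 : c ^ 3 ≠ 1) (hc8 : c ^ 3 ≠ -8)
    (M : Type) [AddCommGroup M] [Module ℂ M] [Module (Sklyanin c) M]
    [IsScalarTower ℂ (Sklyanin c) M] [IsSimpleModule (Sklyanin c) M] :
    Module.Finite ℂ M ∧ Module.finrank ℂ M ≤ 2 := by
  classical
  haveI hscc : SMulCommClass (Sklyanin c) ℂ M := by
    constructor
    intro s a m
    rw [← algebraMap_smul (Sklyanin c) a m, ← mul_smul, ← Algebra.commutes, mul_smul,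
      algebraMap_smul]
  haveI : SMulCommClass ℂ (Sklyanin c) M := SMulCommClass.symm _ _ _
  haveI := IsSimpleModule.nontrivial (Sklyanin c) M
  obtain ⟨m₀, hm₀⟩ := exists_ne (0 : M)
  -- the action map S → M is ℂ-linear and surjective, so M has countable dimension
  let ℓ : Sklyanin c →ₗ[ℂ] M :=
    { toFun := fun s => s • m₀
      map_add' := fun s t => add_smul s t m₀
      map_smul' := fun a s => by simp [smul_assoc] }
  have hℓsurj : Function.Surjective ℓ := by
    intro m
    have hmem : m ∈ Submodule.span (Sklyanin c) {m₀} := by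
      rw [IsSimpleModule.span_singleton_eq_top (Sklyanin c) hm₀]; trivial
    obtain ⟨s, hs⟩ := Submodule.mem_span_singleton.mp hmem
    exact ⟨s, hs⟩
  have hrankM : Module.rank ℂ M ≤ Cardinal.aleph0 :=
    (LinearMap.rank_le_of_surjective ℓ hℓsurj).trans (rank_le c)
  -- notation for generators
  set x := g c 0 with hxdef
  set y := g c 1 with hydef
  set z := g c 2 with hzdef
  have hsq := sq_comm hc1 (rel1 c) (rel2 c) (rel3 c)
  -- the squares are central
  have hcentral : ∀ w ∈ ({x*x, y*y, z*z} : Set (Sklyanin c)), ∀ s : Sklyanin c,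
      w * s = s * w := by
    have hCent : Subalgebra.centralizer ℂ ({x*x, y*y, z*z} : Set (Sklyanin c)) = ⊤ := by
      apply gen_top
      · rw [Subalgebra.mem_centralizer_iff ℂ]
        rintro w (rfl | rfl | rfl)
        · rw [mul_assoc]
        · exact hsq.2.2.1
        · exact hsq.2.2.2.2.1
      · rw [Subalgebra.mem_centralizer_iff ℂ]
        rintro w (rfl | rfl | rfl)
        · exact hsq.1
        · rw [mul_assoc]
        · exact hsq.2.2.2.2.2
      · rw [Subalgebra.mem_centralizer_iff ℂ]
        rintro w (rfl | rfl | rfl)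
        · exact hsq.2.1
        · exact hsq.2.2.2.1
        · rw [mul_assoc]
    intro w hw s
    have hs : s ∈ Subalgebra.centralizer ℂ ({x*x, y*y, z*z} : Set (Sklyanin c)) := by
      rw [hCent]; trivial
    exact (Subalgebra.mem_centralizer_iff ℂ).mp hs w hw
  -- central elements act as scalars
  have mkScalar : ∀ w : Sklyanin c, (∀ s : Sklyanin c, w * s = s * w) →
      ∃ a : ℂ, ∀ m : M, w • m = a • m := by
    intro w hw
    obtain ⟨a, ha⟩ := end_scalar hrankM
      ({ toFun := fun m => w • m
         map_add' := fun m m' => smul_add w m m'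
         map_smul' := fun s m => by
           simp only [RingHom.id_apply, ← mul_smul, hw s] } : Module.End (Sklyanin c) M)
    refine ⟨a, fun m => ?_⟩
    have := congrArg (fun T : Module.End (Sklyanin c) M => T m) ha
    simpa using this
  obtain ⟨α, hα⟩ := mkScalar (x*x) (hcentral _ (by simp))
  obtain ⟨β, hβ⟩ := mkScalar (y*y) (hcentral _ (by simp))
  obtain ⟨γ, hγ⟩ := mkScalar (z*z) (hcentral _ (by simp))
  -- move to operators on M
  let Φ : Sklyanin c →ₐ[ℂ] Module.End ℂ M := Algebra.lsmul ℂ ℂ M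
  have hΦ : ∀ (s : Sklyanin c) (m : M), Φ s m = s • m := fun s m => rfl
  set X := Φ x with hXdef
  set Y := Φ y with hYdef
  set Z := Φ z with hZdef
  have hX2 : X * X = α • (1 : Module.End ℂ M) := by
    ext m
    simp only [Module.End.mul_apply, hΦ, LinearMap.smul_apply, Module.End.one_apply]
    show x • x • m = α • m
    rw [← mul_smul, hα]
  have hY2 : Y * Y = β • (1 : Module.End ℂ M) := by
    ext m
    simp only [Module.End.mul_apply, hΦ, LinearMap.smul_apply, Module.End.one_apply]
    show y • y • m = β • m
    rw [← mul_smul, hβ]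
  have hZ2 : Z * Z = γ • (1 : Module.End ℂ M) := by
    ext m
    simp only [Module.End.mul_apply, hΦ, LinearMap.smul_apply, Module.End.one_apply]
    show z • z • m = γ • m
    rw [← mul_smul, hγ]
  -- operator versions of the relations
  have hrel1 : Y*Z + Z*Y + algebraMap ℂ (Module.End ℂ M) c * (X*X) = 0 := by
    have := congrArg Φ (rel1 c)
    simpa [map_add, map_mul, AlgHom.commutes] using this
  have hrel2 : Z*X + X*Z + algebraMap ℂ (Module.End ℂ M) c * (Y*Y) = 0 := by
    have := congrArg Φ (rel2 c)
    simpa [map_add, map_mul, AlgHom.commutes] using this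
  have hrel3 : X*Y + Y*X + algebraMap ℂ (Module.End ℂ M) c * (Z*Z) = 0 := by
    have := congrArg Φ (rel3 c)
    simpa [map_add, map_mul, AlgHom.commutes] using this
  -- rearranged forms
  have hYX : Y*X = -(X*Y) - (c*γ) • (1 : Module.End ℂ M) := by
    have h' := hrel3
    rw [hZ2, ← Algebra.smul_def, smul_smul] at h'
    have e : Y*X - (-(X*Y) - (c*γ) • (1 : Module.End ℂ M)) =
        X*Y + Y*X + (c*γ) • (1 : Module.End ℂ M) := by abel
    exact sub_eq_zero.mp (e.trans h')
  have hZX : Z*X = -(X*Z) - (c*β) • (1 : Module.End ℂ M) := by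
    have h' := hrel2
    rw [hY2, ← Algebra.smul_def, smul_smul] at h'
    have e : Z*X - (-(X*Z) - (c*β) • (1 : Module.End ℂ M)) =
        Z*X + X*Z + (c*β) • (1 : Module.End ℂ M) := by abel
    exact sub_eq_zero.mp (e.trans h')
  have hZY : Z*Y = -(Y*Z) - (c*α) • (1 : Module.End ℂ M) := by
    have h' := hrel1
    rw [hX2, ← Algebra.smul_def, smul_smul] at h'
    have e : Z*Y - (-(Y*Z) - (c*α) • (1 : Module.End ℂ M)) =
        Y*Z + Z*Y + (c*α) • (1 : Module.End ℂ M) := by abel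
    exact sub_eq_zero.mp (e.trans h')
  -- tail forms of the rewriting rules
  have AX2 : ∀ T : Module.End ℂ M, X*(X*T) = α • T := fun T => by
    rw [← mul_assoc, hX2, smul_mul_assoc, one_mul]
  have AY2 : ∀ T : Module.End ℂ M, Y*(Y*T) = β • T := fun T => by
    rw [← mul_assoc, hY2, smul_mul_assoc, one_mul]
  have AYX : ∀ T : Module.End ℂ M, Y*(X*T) = -(X*(Y*T)) - (c*γ) • T := fun T => by
    rw [← mul_assoc, hYX, sub_mul, neg_mul, mul_assoc, smul_mul_assoc, one_mul]
  have AZX : ∀ T : Module.End ℂ M, Z*(X*T) = -(X*(Z*T)) - (c*β) • T := fun T => by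
    rw [← mul_assoc, hZX, sub_mul, neg_mul, mul_assoc, smul_mul_assoc, one_mul]
  have AZY : ∀ T : Module.End ℂ M, Z*(Y*T) = -(Y*(Z*T)) - (c*α) • T := fun T => by
    rw [← mul_assoc, hZY, sub_mul, neg_mul, mul_assoc, smul_mul_assoc, one_mul]
  -- the spanning set of operators
  set g8 : Fin 8 → Module.End ℂ M := ![1, X, Y, Z, X*Y, Y*Z, X*Z, X*(Y*Z)] with hg8def
  set W : Submodule ℂ (Module.End ℂ M) := Submodule.span ℂ (Set.range g8) with hWdef
  have hb : ∀ i, g8 i ∈ W := fun i => Submodule.subset_span (Set.mem_range_self i)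
  have w1 : (1 : Module.End ℂ M) ∈ W := hb 0
  have w2 : X ∈ W := hb 1
  have w3 : Y ∈ W := hb 2
  have w4 : Z ∈ W := hb 3
  have w5 : X*Y ∈ W := hb 4
  have w6 : Y*Z ∈ W := hb 5
  have w7 : X*Z ∈ W := hb 6
  have w8 : X*(Y*Z) ∈ W := hb 7
  -- closure of W under left multiplication by the generators
  have hXg : ∀ i, X * g8 i ∈ W := by
    intro i
    fin_cases i
    · show X * 1 ∈ W
      rw [mul_one]; exact w2
    · show X * X ∈ W
      rw [hX2]; exact W.smul_mem _ w1
    · show X * Y ∈ W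
      exact w5
    · show X * Z ∈ W
      exact w7
    · show X * (X*Y) ∈ W
      rw [AX2 Y]; exact W.smul_mem _ w3
    · show X * (Y*Z) ∈ W
      exact w8
    · show X * (X*Z) ∈ W
      rw [AX2 Z]; exact W.smul_mem _ w4
    · show X * (X*(Y*Z)) ∈ W
      rw [AX2 (Y*Z)]; exact W.smul_mem _ w6
  have hYg : ∀ i, Y * g8 i ∈ W := by
    intro i
    fin_cases i
    · show Y * 1 ∈ W
      rw [mul_one]; exact w3
    · show Y * X ∈ W
      rw [hYX]; exact W.sub_mem (W.neg_mem w5) (W.smul_mem _ w1)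
    · show Y * Y ∈ W
      rw [hY2]; exact W.smul_mem _ w1
    · show Y * Z ∈ W
      exact w6
    · show Y * (X*Y) ∈ W
      rw [AYX Y, hY2, mul_smul_comm, mul_one]
      exact W.sub_mem (W.neg_mem (W.smul_mem _ w2)) (W.smul_mem _ w3)
    · show Y * (Y*Z) ∈ W
      rw [AY2 Z]; exact W.smul_mem _ w4
    · show Y * (X*Z) ∈ W
      rw [AYX Z]; exact W.sub_mem (W.neg_mem w8) (W.smul_mem _ w4)
    · show Y * (X*(Y*Z)) ∈ W
      rw [AYX (Y*Z), AY2 Z, mul_smul_comm]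
      exact W.sub_mem (W.neg_mem (W.smul_mem _ w7)) (W.smul_mem _ w6)
  have hZg : ∀ i, Z * g8 i ∈ W := by
    intro i
    fin_cases i
    · show Z * 1 ∈ W
      rw [mul_one]; exact w4
    · show Z * X ∈ W
      rw [hZX]; exact W.sub_mem (W.neg_mem w7) (W.smul_mem _ w1)
    · show Z * Y ∈ W
      rw [hZY]; exact W.sub_mem (W.neg_mem w6) (W.smul_mem _ w1)
    · show Z * Z ∈ W
      rw [hZ2]; exact W.smul_mem _ w1
    · show Z * (X*Y) ∈ W
      rw [AZX Y, hZY, mul_sub, mul_neg, mul_smul_comm, mul_one]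
      exact W.sub_mem
        (W.neg_mem (W.sub_mem (W.neg_mem w8) (W.smul_mem _ w2))) (W.smul_mem _ w3)
    · show Z * (Y*Z) ∈ W
      rw [AZY Z, hZ2, mul_smul_comm, mul_one]
      exact W.sub_mem (W.neg_mem (W.smul_mem _ w3)) (W.smul_mem _ w4)
    · show Z * (X*Z) ∈ W
      rw [AZX Z, hZ2, mul_smul_comm, mul_one]
      exact W.sub_mem (W.neg_mem (W.smul_mem _ w2)) (W.smul_mem _ w4)
    · show Z * (X*(Y*Z)) ∈ W
      rw [AZX (Y*Z), AZY Z, hZ2, mul_smul_comm, mul_one, mul_sub, mul_neg,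
        mul_smul_comm, mul_smul_comm]
      exact W.sub_mem
        (W.neg_mem (W.sub_mem (W.neg_mem (W.smul_mem _ w5)) (W.smul_mem _ w7)))
        (W.smul_mem _ w6)
  have hXmul : ∀ w ∈ W, X * w ∈ W := by
    intro w hw
    induction hw using Submodule.span_induction with
    | mem t ht => obtain ⟨i, rfl⟩ := ht; exact hXg i
    | zero => rw [mul_zero]; exact W.zero_mem
    | add u v _ _ hu hv => rw [mul_add]; exact W.add_mem hu hv
    | smul a u _ hu => rw [mul_smul_comm]; exact W.smul_mem a hu
  have hYmul : ∀ w ∈ W, Y * w ∈ W := by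
    intro w hw
    induction hw using Submodule.span_induction with
    | mem t ht => obtain ⟨i, rfl⟩ := ht; exact hYg i
    | zero => rw [mul_zero]; exact W.zero_mem
    | add u v _ _ hu hv => rw [mul_add]; exact W.add_mem hu hv
    | smul a u _ hu => rw [mul_smul_comm]; exact W.smul_mem a hu
  have hZmul : ∀ w ∈ W, Z * w ∈ W := by
    intro w hw
    induction hw using Submodule.span_induction with
    | mem t ht => obtain ⟨i, rfl⟩ := ht; exact hZg i
    | zero => rw [mul_zero]; exact W.zero_mem
    | add u v _ _ hu hv => rw [mul_add]; exact W.add_mem hu hv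
    | smul a u _ hu => rw [mul_smul_comm]; exact W.smul_mem a hu
  -- every operator coming from the algebra lies in W
  let B : Subalgebra ℂ (Sklyanin c) :=
    { carrier := {s | ∀ w ∈ W, Φ s * w ∈ W}
      mul_mem' := fun {s t} hs ht w hw => by
        rw [map_mul, mul_assoc]; exact hs _ (ht w hw)
      one_mem' := fun w hw => by rw [map_one, one_mul]; exact hw
      add_mem' := fun {s t} hs ht w hw => by
        rw [map_add, add_mul]; exact W.add_mem (hs w hw) (ht w hw)
      zero_mem' := fun w hw => by rw [map_zero, zero_mul]; exact W.zero_mem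
      algebraMap_mem' := fun a w hw => by
        rw [AlgHom.commutes, ← Algebra.smul_def]; exact W.smul_mem a hw }
  have hB : B = ⊤ := gen_top c B hXmul hYmul hZmul
  have hrange : ∀ s : Sklyanin c, Φ s ∈ W := by
    intro s
    have hsB : s ∈ B := by rw [hB]; trivial
    have h := hsB 1 w1
    rwa [mul_one] at h
  -- finite-dimensionality of M
  let evm : Module.End ℂ M →ₗ[ℂ] M :=
    { toFun := fun T => T m₀, map_add' := fun _ _ => rfl, map_smul' := fun _ _ => rfl }
  have hspanM : (⊤ : Submodule ℂ M) ≤ Submodule.span ℂ (Set.range fun i => g8 i m₀) := by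
    intro m _
    obtain ⟨s, rfl⟩ := hℓsurj m
    have hw : evm (Φ s) ∈ Submodule.map evm W := Submodule.mem_map_of_mem (hrange s)
    rw [hWdef, Submodule.map_span, ← Set.range_comp] at hw
    exact hw
  have hfin : Module.Finite ℂ M := by
    refine ⟨⟨Finset.univ.image (fun i => g8 i m₀), le_antisymm le_top ?_⟩⟩
    refine hspanM.trans ?_
    apply Submodule.span_mono
    rintro t ⟨i, hi⟩
    simp only [Finset.coe_image, Finset.coe_univ, Set.image_univ]
    exact ⟨i, hi⟩
  haveI := hfin
  -- Jacobson density: the action map is onto End ℂ M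
  set n := Module.finrank ℂ M with hndef
  let b := Module.finBasis ℂ M
  haveI hssM : IsSemisimpleModule (Sklyanin c) M := by
    apply IsSemisimpleModule.of_sSup_simples_eq_top
    refine le_antisymm le_top (le_sSup ?_)
    show IsSimpleModule (Sklyanin c) (⊤ : Submodule (Sklyanin c) M)
    exact IsSimpleModule.congr Submodule.topEquiv
  haveI hssPi : IsSemisimpleModule (Sklyanin c) (Fin n → M) := by
    apply isSemisimpleModule_of_isSemisimpleModule_submodule'
      (p := fun i => LinearMap.range (LinearMap.single (Sklyanin c) (fun _ : Fin n => M) i))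
    · intro i
      have hinj : Function.Injective (LinearMap.single (Sklyanin c) (fun _ : Fin n => M) i) :=
        LinearMap.ker_eq_bot.mp (LinearMap.ker_single _ _ _)
      exact IsSemisimpleModule.congr (LinearEquiv.ofInjective _ hinj).symm
    · exact LinearMap.iSup_range_single _ _
  set v : Fin n → M := ⇑b with hvdef
  set K : Submodule (Sklyanin c) (Fin n → M) := Submodule.span (Sklyanin c) {v} with hKdef
  obtain ⟨K', hK'⟩ := exists_isCompl K
  set E : (Fin n → M) →ₗ[Sklyanin c] (Fin n → M) :=
    K.subtype.comp (K.linearProjOfIsCompl K' hK') with hEdef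
  have hvK : v ∈ K := Submodule.mem_span_singleton_self v
  have hEv : E v = v := by
    show ↑(K.projectionOnto K' hK' v) = v
    rw [show v = ((⟨v, hvK⟩ : K) : Fin n → M) from rfl,
      Submodule.projectionOnto_apply_left]
  have hErange : ∀ u, E u ∈ K := fun u => (K.linearProjOfIsCompl K' hK' u).2
  have hcomp : ∀ i j : Fin n, ∃ a : ℂ, ∀ m : M,
      E (LinearMap.single (Sklyanin c) (fun _ => M) j m) i = a • m := by
    intro i j
    obtain ⟨a, ha⟩ := end_scalar hrankM
      ((LinearMap.proj i).comp (E.comp (LinearMap.single (Sklyanin c) (fun _ => M) j)))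
    exact ⟨a, fun m => by
      have := congrArg (fun T : M →ₗ[Sklyanin c] M => T m) ha
      simpa using this⟩
  choose lam hlam using hcomp
  have hEapp : ∀ (u : Fin n → M) (i : Fin n), E u i = ∑ j, lam i j • u j := by
    intro u i
    have hu : u = ∑ j, LinearMap.single (Sklyanin c) (fun _ => M) j (u j) := by
      funext k
      rw [Finset.sum_apply]
      have := congrArg (fun w : Fin n → M => w k) (Finset.univ_sum_single u).symm
      simpa using this
    calc E u i = (∑ j, E (LinearMap.single (Sklyanin c) (fun _ => M) j (u j))) i := by
          conv_lhs => rw [hu]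
          rw [map_sum]
      _ = ∑ j, E (LinearMap.single (Sklyanin c) (fun _ => M) j (u j)) i := by
          rw [Finset.sum_apply]
      _ = ∑ j, lam i j • u j := Finset.sum_congr rfl fun j _ => hlam i j (u j)
  have hsurjPhi : ∀ f : Module.End ℂ M, ∃ s : Sklyanin c, Φ s = f := by
    intro f
    set w : Fin n → M := fun i => f (v i) with hwdef
    have hEw : E w = w := by
      funext i
      rw [hEapp w i]
      have hvi : ∑ j, lam i j • v j = v i := by rw [← hEapp v i, hEv]
      calc ∑ j, lam i j • w j = f (∑ j, lam i j • v j) := by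
            rw [map_sum]
            exact Finset.sum_congr rfl fun j _ => (f.map_smul _ _).symm
        _ = f (v i) := by rw [hvi]
    have hwK : w ∈ K := hEw ▸ hErange w
    obtain ⟨s, hs⟩ := Submodule.mem_span_singleton.mp hwK
    refine ⟨s, b.ext fun i => ?_⟩
    have hsv := congrArg (fun u : Fin n → M => u i) hs
    simp only [Pi.smul_apply] at hsv
    show Φ s (b i) = f (b i)
    rw [hΦ]
    exact hsv
  have hWtop : W = ⊤ := by
    rw [eq_top_iff]
    intro f _
    obtain ⟨s, rfl⟩ := hsurjPhi f
    exact hrange s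
  have hrankEnd : Module.rank ℂ (Module.End ℂ M) ≤ 8 := by
    have h1 : Module.rank ℂ W = Module.rank ℂ (Module.End ℂ M) := by
      rw [hWtop]; exact rank_top ℂ _
    rw [← h1, hWdef]
    refine (rank_span_le _).trans ?_
    refine Cardinal.mk_range_le.trans ?_
    simp
  have hfr : Module.finrank ℂ (Module.End ℂ M) ≤ 8 := Module.finrank_le_of_rank_le hrankEnd
  have hnn : n * n ≤ 8 := by
    have heq := Module.finrank_linearMap ℂ ℂ M M
    have hfr2 : Module.finrank ℂ (M →ₗ[ℂ] M) ≤ 8 := hfr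
    rw [heq] at hfr2
    exact hfr2
  refine ⟨hfin, ?_⟩
  nlinarith [hnn]
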